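/- For any two elements u, v of a Coxeter group W, there is a unique greatest lower bound w° with respect to the weak left order ≤_L: w° ≤_L u, w° ≤_L v, and every w with w ≤_L u and w ≤_L v satisfies w ≤_L w°. -/

import Mathlib

/-- The weak left order on a Coxeter group: `u ≤_L v` iff there is `w` with
`v = uw` and `ℓ(v) = ℓ(u) + ℓ(w)`. -/
def weakLeftLE {B W : Type*} [Group W] {M : CoxeterMatrix B}
    (cs : CoxeterSystem M W) (u v : W) : Prop :=
  ∃ w : W, v = u * w ∧ cs.length v = cs.length u + cs.length w

namespace WeakMeetAux

open List CoxeterSystem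

open scoped Classical

variable {B W : Type*} [Group W] {M : CoxeterMatrix B} (cs : CoxeterSystem M W)

local prefix:100 "σ" => cs.simple
local prefix:100 "π" => cs.wordProd
local prefix:100 "ℓ" => cs.length

/-! ### Basic facts about right inversion sequences -/

lemma rightInvSeq_cons (i : B) (ω : List B) :
    cs.rightInvSeq (i :: ω) = ((π ω)⁻¹ * σ i * π ω) :: cs.rightInvSeq ω := rfl

lemma rightInvSeq_append (α β : List B) :
    cs.rightInvSeq (α ++ β)
      = (cs.rightInvSeq α).map (fun x => (π β)⁻¹ * x * π β) ++ cs.rightInvSeq β := by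
  induction α with
  | nil => simp
  | cons i α ih =>
    rw [cons_append, rightInvSeq_cons, rightInvSeq_cons, ih, map_cons, cons_append]
    congr 1
    simp only [cs.wordProd_append, mul_inv_rev]
    group

lemma leftInvSeq_eq_map (ω : List B) :
    cs.leftInvSeq ω = (cs.rightInvSeq ω).map (fun x => π ω * x * (π ω)⁻¹) := by
  induction ω with
  | nil => simp
  | cons i ω ih =>
    have hl : cs.leftInvSeq (i :: ω)
        = σ i :: (cs.leftInvSeq ω).map (MulAut.conj (σ i)) := rfl
    rw [hl, rightInvSeq_cons, ih, map_cons, map_map]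
    congr 1
    · have h3 : π (i :: ω) * ((π ω)⁻¹ * σ i * π ω) * (π (i :: ω))⁻¹ = σ i := by
        rw [cs.wordProd_cons, mul_inv_rev, cs.inv_simple,
          show σ i * π ω * ((π ω)⁻¹ * σ i * π ω) * ((π ω)⁻¹ * σ i) = σ i * (σ i * σ i) from
            by group,
          cs.simple_mul_simple_self, mul_one]
      exact h3.symm
    · apply List.map_congr_left
      intro x _
      simp only [Function.comp_apply, MulAut.conj_apply, cs.wordProd_cons, mul_inv_rev,
        cs.inv_simple]
      group

lemma conj_injective (c d : W) : Function.Injective (fun x : W => c * x * d) := by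
  intro x y h
  simp only at h
  exact mul_left_cancel (mul_right_cancel h)

/-! ### The reflection-counting permutation representation -/

/-- The basic involution used to build the permutation representation of `W`
on `W × ZMod 2`. -/
noncomputable def sgmAux (i : B) : W × ZMod 2 → W × ZMod 2 :=
  fun p => (σ i * p.1 * σ i, p.2 + if p.1 = σ i then 1 else 0)

lemma simple_conj_eq_iff (i : B) (x : W) : (σ i * x * σ i = σ i) ↔ (x = σ i) := by
  constructor
  · intro h
    have hx : x = (σ i)⁻¹ * (σ i * x * σ i) * (σ i)⁻¹ := by group
    rw [h] at hx
    rw [hx, cs.inv_simple, cs.simple_mul_simple_self, one_mul]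
  · intro h
    rw [h, cs.simple_mul_simple_self, one_mul]

lemma sgmAux_involutive (i : B) : Function.Involutive (sgmAux cs i) := by
  rintro ⟨x, ε⟩
  simp only [sgmAux, Prod.mk.injEq]
  constructor
  · rw [show σ i * (σ i * x * σ i) * σ i = (σ i * σ i) * x * (σ i * σ i) by group,
      cs.simple_mul_simple_self, one_mul, mul_one]
  · change ε + (if x = σ i then 1 else 0) + (if σ i * x * σ i = σ i then 1 else 0) = ε
    by_cases h : x = σ i
    · rw [if_pos h, if_pos ((simple_conj_eq_iff cs i x).mpr h), add_assoc,
        show (1 : ZMod 2) + 1 = 0 by decide, add_zero]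
    · rw [if_neg h, if_neg (fun hc => h ((simple_conj_eq_iff cs i x).mp hc)), add_zero,
        add_zero]

/-- The permutation of `W × ZMod 2` associated to the simple reflection `i`. -/
noncomputable def sgm (i : B) : Equiv.Perm (W × ZMod 2) := (sgmAux_involutive cs i).toPerm

lemma sgm_apply (i : B) (x : W) (ε : ZMod 2) :
    sgm cs i (x, ε) = (σ i * x * σ i, ε + if x = σ i then 1 else 0) := rfl

lemma sgm_prod (ω : List B) (t : W) (ε : ZMod 2) :
    ((ω.map (sgm cs)).prod) (t, ε)
      = (π ω * t * (π ω)⁻¹, ε + ((cs.rightInvSeq ω).count t : ZMod 2)) := by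
  induction ω with
  | nil => simp
  | cons i ω ih =>
    rw [map_cons, prod_cons, Equiv.Perm.mul_apply, ih, sgm_apply]
    have hcond : (π ω * t * (π ω)⁻¹ = σ i) ↔ ((π ω)⁻¹ * σ i * π ω = t) := by
      constructor
      · intro h; rw [← h]; group
      · intro h; rw [← h]; group
    have hcnt : (cs.rightInvSeq (i :: ω)).count t
        = (cs.rightInvSeq ω).count t + (if (π ω)⁻¹ * σ i * π ω = t then 1 else 0) := by
      rw [rightInvSeq_cons]
      rw [show ((π ω)⁻¹ * σ i * π ω :: cs.rightInvSeq ω)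
          = [(π ω)⁻¹ * σ i * π ω] ++ cs.rightInvSeq ω from rfl, List.count_append,
        List.count_singleton', Nat.add_comm]
    rw [Prod.mk.injEq]
    constructor
    · simp only [cs.wordProd_cons, mul_inv_rev, cs.inv_simple]
      group
    · rw [hcnt]
      by_cases h : (π ω)⁻¹ * σ i * π ω = t
      · rw [if_pos h, if_pos (hcond.mpr h)]
        push_cast
        ring
      · rw [if_neg h, if_neg (fun hc => h (hcond.mp hc))]
        push_cast
        ring

/-! ### Alternating words -/

lemma alternatingWord_add (i i' : B) (a b : ℕ) :
    alternatingWord i i' (a + b)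
      = alternatingWord (if Even a then i else i') (if Even a then i' else i) b
        ++ alternatingWord i i' a := by
  induction b with
  | zero => simp [alternatingWord]
  | succ b ih =>
    rw [show a + (b + 1) = (a + b) + 1 by omega, alternatingWord_succ', ih,
      alternatingWord_succ', cons_append]
    congr 1
    by_cases ha : Even a <;> by_cases hb : Even b <;>
      simp [ha, hb, Nat.even_add]

lemma prod_alt_even (i i' : B) (r : ℕ) :
    π (alternatingWord i i' (2 * r)) = (σ i * σ i') ^ r := by
  rw [cs.prod_alternatingWord_eq_mul_pow]
  rw [if_pos ⟨r, by omega⟩, one_mul, Nat.mul_div_cancel_left r (by norm_num)]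

lemma prod_alt_odd (i i' : B) (r : ℕ) :
    π (alternatingWord i i' (2 * r + 1)) = σ i' * (σ i * σ i') ^ r := by
  rw [cs.prod_alternatingWord_eq_mul_pow]
  have h1 : ¬ Even (2 * r + 1) := by simp [Nat.even_add_one, parity_simps]
  have h2 : (2 * r + 1) / 2 = r := by omega
  rw [if_neg h1, h2]

/-! ### Dihedral relations -/

lemma semiconj_pow_eq (a b : W) (r : ℕ) : a * (b * a) ^ r = (a * b) ^ r * a := by
  have h : SemiconjBy a (b * a) (a * b) := by
    unfold SemiconjBy
    group
  exact (h.pow_right r).eq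

lemma ba_pow (i i' : B) (r : ℕ) : (σ i' * σ i) ^ r = ((σ i * σ i') ^ r)⁻¹ := by
  have h : σ i' * σ i = (σ i * σ i')⁻¹ := by
    rw [mul_inv_rev, cs.inv_simple, cs.inv_simple]
  rw [h, inv_pow]

lemma braid_move_1 (i i' : B) :
    σ (if Even (M i i') then i' else i) * π (alternatingWord i i' (M i i'))
      = π (alternatingWord i i' (M i i')) * σ i' := by
  obtain ⟨r, hm | hm⟩ := Nat.even_or_odd' (M i i')
  · have hrel : (σ i * σ i') ^ (2 * r) = 1 := by rw [← hm]; exact cs.simple_mul_simple_pow i i'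
    have hinv : ((σ i * σ i') ^ r)⁻¹ = (σ i * σ i') ^ r := by
      apply inv_eq_of_mul_eq_one_right
      rw [← pow_add, show r + r = 2 * r by omega, hrel]
    rw [hm, if_pos ⟨r, by omega⟩, prod_alt_even]
    calc σ i' * (σ i * σ i') ^ r = (σ i' * σ i) ^ r * σ i' := semiconj_pow_eq _ _ r
    _ = ((σ i * σ i') ^ r)⁻¹ * σ i' := by rw [ba_pow cs i i' r]
    _ = (σ i * σ i') ^ r * σ i' := by rw [hinv]
  · have hrel : (σ i * σ i') ^ (2 * r + 1) = 1 := by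
      rw [← hm]; exact cs.simple_mul_simple_pow i i'
    have hinv : ((σ i * σ i') ^ r)⁻¹ = (σ i * σ i') ^ (r + 1) := by
      apply inv_eq_of_mul_eq_one_left
      rw [← pow_add, show r + 1 + r = 2 * r + 1 by omega, hrel]
    rw [hm, if_neg (by simp [Nat.even_add_one, parity_simps]), prod_alt_odd]
    calc σ i * (σ i' * (σ i * σ i') ^ r) = (σ i * σ i') ^ (r + 1) := by
          rw [pow_succ']; group
    _ = ((σ i * σ i') ^ r)⁻¹ := hinv.symm
    _ = (σ i' * σ i) ^ r := (ba_pow cs i i' r).symm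
    _ = (σ i' * σ i) ^ r * (σ i' * σ i') := by rw [cs.simple_mul_simple_self, mul_one]
    _ = ((σ i' * σ i) ^ r * σ i') * σ i' := by group
    _ = (σ i' * (σ i * σ i') ^ r) * σ i' := by rw [← semiconj_pow_eq]

lemma braid_move_2 (i i' : B) :
    σ (if Even (M i i') then i else i') * π (alternatingWord i i' (M i i'))
      = π (alternatingWord i i' (M i i')) * σ i := by
  obtain ⟨r, hm | hm⟩ := Nat.even_or_odd' (M i i')
  · have hrel : (σ i * σ i') ^ (2 * r) = 1 := by rw [← hm]; exact cs.simple_mul_simple_pow i i'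
    have hinv : ((σ i * σ i') ^ r)⁻¹ = (σ i * σ i') ^ r := by
      apply inv_eq_of_mul_eq_one_right
      rw [← pow_add, show r + r = 2 * r by omega, hrel]
    rw [hm, if_pos ⟨r, by omega⟩, prod_alt_even]
    have heq : (σ i * σ i') ^ r = (σ i' * σ i) ^ r := by
      rw [ba_pow cs i i' r, hinv]
    calc σ i * (σ i * σ i') ^ r = σ i * (σ i' * σ i) ^ r := by
          rw [show σ i * (σ i * σ i') ^ r = σ i * (σ i' * σ i) ^ r from by rw [heq]]
    _ = (σ i * σ i') ^ r * σ i := semiconj_pow_eq _ _ r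
  · have hrel : (σ i * σ i') ^ (2 * r + 1) = 1 := by
      rw [← hm]; exact cs.simple_mul_simple_pow i i'
    have hinv : ((σ i * σ i') ^ (r + 1))⁻¹ = (σ i * σ i') ^ r := by
      apply inv_eq_of_mul_eq_one_left
      rw [← pow_add, show r + (r + 1) = 2 * r + 1 by omega, hrel]
    rw [hm, if_neg (by simp [Nat.even_add_one, parity_simps]), prod_alt_odd]
    calc σ i' * (σ i' * (σ i * σ i') ^ r) = (σ i' * σ i') * (σ i * σ i') ^ r := by group
    _ = (σ i * σ i') ^ r := by rw [cs.simple_mul_simple_self, one_mul]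
    _ = ((σ i * σ i') ^ (r + 1))⁻¹ := hinv.symm
    _ = (σ i' * σ i) ^ (r + 1) := (ba_pow cs i i' (r + 1)).symm
    _ = (σ i' * σ i) ^ r * (σ i' * σ i) := by rw [pow_succ]
    _ = ((σ i' * σ i) ^ r * σ i') * σ i := by group
    _ = (σ i' * (σ i * σ i') ^ r) * σ i := by rw [← semiconj_pow_eq]

lemma claimF (i i' : B) (n : ℕ) :
    π (alternatingWord (if Even (M i i') then i else i') (if Even (M i i') then i' else i) n)
        * π (alternatingWord i i' (M i i'))
      = π (alternatingWord i i' (M i i')) * π (alternatingWord i i' n) := by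
  induction n with
  | zero => simp [alternatingWord]
  | succ n ih =>
    rw [alternatingWord_succ' _ _ n, alternatingWord_succ' i i' n, cs.wordProd_cons,
      cs.wordProd_cons, mul_assoc, ih, ← mul_assoc, ← mul_assoc]
    congr 1
    by_cases hn : Even n
    · rw [if_pos hn, if_pos hn]
      exact braid_move_1 cs i i'
    · rw [if_neg hn, if_neg hn]
      exact braid_move_2 cs i i'

lemma ris_alt_conj (i i' : B) (n : ℕ) :
    (cs.rightInvSeq (alternatingWord (if Even (M i i') then i else i')
        (if Even (M i i') then i' else i) n)).map
      (fun x => (π (alternatingWord i i' (M i i')))⁻¹ * x * π (alternatingWord i i' (M i i')))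
      = cs.rightInvSeq (alternatingWord i i' n) := by
  induction n with
  | zero => simp [alternatingWord]
  | succ n ih =>
    rw [alternatingWord_succ' _ _ n, alternatingWord_succ' i i' n, rightInvSeq_cons,
      rightInvSeq_cons, map_cons]
    congr 1
    · have hF := claimF cs i i' n
      have hg : σ (if Even n then (if Even (M i i') then i' else i)
            else (if Even (M i i') then i else i'))
            * π (alternatingWord i i' (M i i'))
          = π (alternatingWord i i' (M i i')) * σ (if Even n then i' else i) := by
        by_cases hn : Even n
        · rw [if_pos hn, if_pos hn]; exact braid_move_1 cs i i'
        · rw [if_neg hn, if_neg hn]; exact braid_move_2 cs i i'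
      have hP : π (alternatingWord (if Even (M i i') then i else i')
            (if Even (M i i') then i' else i) n)
          = π (alternatingWord i i' (M i i')) * π (alternatingWord i i' n)
            * (π (alternatingWord i i' (M i i')))⁻¹ := by
        rw [← hF]; group
      have hs : σ (if Even n then (if Even (M i i') then i' else i)
            else (if Even (M i i') then i else i'))
          = π (alternatingWord i i' (M i i')) * σ (if Even n then i' else i)
            * (π (alternatingWord i i' (M i i')))⁻¹ := by
        rw [← hg]; group
      show (fun x => (π (alternatingWord i i' (M i i')))⁻¹ * x
          * π (alternatingWord i i' (M i i')))
          ((π (alternatingWord (if Even (M i i') then i else i')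
              (if Even (M i i') then i' else i) n))⁻¹
            * σ (if Even n then (if Even (M i i') then i' else i)
                else (if Even (M i i') then i else i'))
            * π (alternatingWord (if Even (M i i') then i else i')
              (if Even (M i i') then i' else i) n))
          = (π (alternatingWord i i' n))⁻¹ * σ (if Even n then i' else i)
            * π (alternatingWord i i' n)
      simp only
      rw [hP, hs]
      group

/-! ### Liftability and the homomorphism -/

lemma pow_eq_prod_map_sgm (i i' : B) (m : ℕ) :
    (sgm cs i * sgm cs i') ^ m = ((alternatingWord i i' (2 * m)).map (sgm cs)).prod := by
  induction m with
  | zero => simp [alternatingWord]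
  | succ m ih =>
    have h2 : Even (2 * m) := ⟨m, by omega⟩
    have h1 : ¬ Even (2 * m + 1) := by
      rw [Nat.even_add_one]
      exact fun hc => hc h2
    rw [show 2 * (m + 1) = (2 * m) + 1 + 1 by ring, alternatingWord_succ',
      alternatingWord_succ']
    rw [if_neg h1, if_pos h2]
    rw [map_cons, map_cons, prod_cons, prod_cons, ← ih, pow_succ']
    rw [mul_assoc]

lemma sgm_liftable : M.IsLiftable (sgm cs) := by
  intro i i'
  apply Equiv.ext
  rintro ⟨t, ε⟩
  rw [pow_eq_prod_map_sgm, sgm_prod]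
  have hπ : π (alternatingWord i i' (2 * M i i')) = 1 := by
    rw [prod_alt_even, cs.simple_mul_simple_pow]
  have hc : (cs.rightInvSeq (alternatingWord i i' (2 * M i i'))).count t
      = 2 * ((cs.rightInvSeq (alternatingWord i i' (M i i'))).count t) := by
    rw [two_mul, alternatingWord_add, rightInvSeq_append, ris_alt_conj, count_append, two_mul]
  have h2c : ((2 * ((cs.rightInvSeq (alternatingWord i i' (M i i'))).count t) : ℕ)
      : ZMod 2) = 0 := by
    rw [Nat.cast_mul, show ((2 : ℕ) : ZMod 2) = 0 from by decide, zero_mul]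
  rw [hπ, hc, Equiv.Perm.one_apply, Prod.mk.injEq]
  refine ⟨by group, ?_⟩
  rw [h2c, add_zero]

/-- The permutation representation of `W` on `W × ZMod 2`. -/
noncomputable def phi : W →* Equiv.Perm (W × ZMod 2) :=
  cs.lift ⟨sgm cs, sgm_liftable cs⟩

lemma phi_simple (i : B) : phi cs (σ i) = sgm cs i :=
  cs.lift_apply_simple (sgm_liftable cs) i

lemma phi_wordProd (ω : List B) : phi cs (π ω) = ((ω.map (sgm cs)).prod) := by
  induction ω with
  | nil => simp [cs.wordProd_nil]
  | cons i ω ih =>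
    rw [cs.wordProd_cons, map_mul, phi_simple, map_cons, prod_cons, ih]

lemma count_parity (ω ω' : List B) (h : π ω = π ω') (t : W) :
    ((cs.rightInvSeq ω).count t : ZMod 2) = ((cs.rightInvSeq ω').count t : ZMod 2) := by
  have h2 := congrArg (phi cs) h
  rw [phi_wordProd, phi_wordProd] at h2
  have h3 := congrArg (fun f : Equiv.Perm (W × ZMod 2) => (f (t, 0)).2) h2
  simpa [sgm_prod] using h3

/-! ### Counting reflections -/

lemma count_map_conj (c d : W) (l : List W) (t : W) :
    (l.map (fun x => c * x * d)).count (c * t * d) = l.count t :=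
  List.count_map_of_injective l _ (conj_injective c d) t

lemma count_self_reflection {t : W} (ht : cs.IsReflection t) {ω : List B} (hω : π ω = t) :
    (((cs.rightInvSeq ω).count t : ℕ) : ZMod 2) = 1 := by
  obtain ⟨p, i, rfl⟩ := ht
  obtain ⟨ωp, hp⟩ := cs.wordProd_surjective p
  have hπγ : π (ωp ++ ([i] ++ ωp.reverse)) = p * σ i * p⁻¹ := by
    rw [cs.wordProd_append, cs.wordProd_append, cs.wordProd_reverse, cs.wordProd_singleton, hp,
      mul_assoc]
  rw [count_parity cs ω (ωp ++ ([i] ++ ωp.reverse)) (by rw [hω, hπγ]) _]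
  rw [rightInvSeq_append, rightInvSeq_append, List.count_append, List.count_append]
  have hπβ : π ([i] ++ ωp.reverse) = σ i * p⁻¹ := by
    rw [cs.wordProd_append, cs.wordProd_reverse, cs.wordProd_singleton, hp]
  have hπr : π (ωp.reverse) = p⁻¹ := by rw [cs.wordProd_reverse, hp]
  -- middle part
  have hmid : ((cs.rightInvSeq [i]).map
      (fun x => (π ωp.reverse)⁻¹ * x * π ωp.reverse)).count (p * σ i * p⁻¹) = 1 := by
    rw [cs.rightInvSeq_singleton, hπr]
    simp [List.count_singleton', inv_inv]
  -- first part
  have hfst : ((cs.rightInvSeq ωp).map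
      (fun x => (π ([i] ++ ωp.reverse))⁻¹ * x * π ([i] ++ ωp.reverse))).count (p * σ i * p⁻¹)
      = (cs.rightInvSeq ωp).count (σ i) := by
    rw [hπβ]
    have hc := count_map_conj ((σ i * p⁻¹)⁻¹) (σ i * p⁻¹) (cs.rightInvSeq ωp) (σ i)
    rw [show (σ i * p⁻¹)⁻¹ * σ i * (σ i * p⁻¹) = p * σ i * p⁻¹ from by
      rw [mul_inv_rev, inv_inv, cs.inv_simple,
        show p * σ i * σ i * (σ i * p⁻¹) = p * (σ i * σ i) * σ i * p⁻¹ from by group,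
        cs.simple_mul_simple_self, mul_one]] at hc
    exact hc
  -- last part
  have hlst : (cs.rightInvSeq ωp.reverse).count (p * σ i * p⁻¹)
      = (cs.rightInvSeq ωp).count (σ i) := by
    rw [cs.rightInvSeq_reverse, List.count_reverse, leftInvSeq_eq_map, hp]
    exact count_map_conj p p⁻¹ (cs.rightInvSeq ωp) (σ i)
  rw [hmid, hfst, hlst]
  push_cast
  have hall : ∀ c : ZMod 2, c + (1 + c) = 1 := by decide
  exact hall _

lemma count_rightInversion {v t : W} (h : cs.IsRightInversion v t) {ω : List B}
    (hω : π ω = v) : (((cs.rightInvSeq ω).count t : ℕ) : ZMod 2) = 1 := by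
  obtain ⟨ω', hred, hv'⟩ := cs.exists_reduced_word' (v * t)
  obtain ⟨ωt, hωt⟩ := cs.wordProd_surjective t
  have hπ : π (ω' ++ ωt) = v := by
    rw [cs.wordProd_append, ← hv', hωt, mul_assoc, h.1.mul_self, mul_one]
  rw [count_parity cs ω (ω' ++ ωt) (by rw [hω, hπ]) t]
  rw [rightInvSeq_append, List.count_append]
  have hnot : t ∉ cs.rightInvSeq ω' := by
    intro hmem
    have h2 := (cs.isRightInversion_of_mem_rightInvSeq hred hmem).2
    rw [← hv', mul_assoc, h.1.mul_self, mul_one] at h2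
    have h3 := h.2
    omega
  have hfst : ((cs.rightInvSeq ω').map (fun x => (π ωt)⁻¹ * x * π ωt)).count t = 0 := by
    rw [hωt]
    have hc := count_map_conj t⁻¹ t (cs.rightInvSeq ω') t
    rw [show t⁻¹ * t * t = t from by group] at hc
    rw [hc]
    exact List.count_eq_zero.mpr hnot
  rw [hfst, Nat.zero_add]
  exact count_self_reflection cs h.1 hωt

lemma mem_rightInvSeq {v t : W} (h : cs.IsRightInversion v t) {ω : List B}
    (hω : π ω = v) : t ∈ cs.rightInvSeq ω := by
  by_contra hmem
  have h0 : (cs.rightInvSeq ω).count t = 0 := List.count_eq_zero.mpr hmem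
  have h1 := count_rightInversion cs h hω
  rw [h0] at h1
  simp at h1

/-! ### Order lemmas for the weak left (prefix) order -/

lemma le_one_left (w : W) : weakLeftLE cs 1 w :=
  ⟨w, (one_mul w).symm, by rw [cs.length_one, Nat.zero_add]⟩

lemma le_length {a b : W} (h : weakLeftLE cs a b) : ℓ a ≤ ℓ b := by
  obtain ⟨x, rfl, hx⟩ := h
  omega

lemma le_antisymm' {a b : W} (h1 : weakLeftLE cs a b) (h2 : weakLeftLE cs b a) : a = b := by
  obtain ⟨x, rfl, hx⟩ := h1
  obtain ⟨y, hy, hy2⟩ := h2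
  have hx0 : ℓ x = 0 := by omega
  rw [cs.length_eq_zero_iff.mp hx0, mul_one]

lemma T1 {w u : W} {i : B} (h : weakLeftLE cs w u) (hd : ℓ (σ i * w) < ℓ w) :
    ℓ (σ i * u) < ℓ u ∧ weakLeftLE cs (σ i * w) (σ i * u) := by
  obtain ⟨x, rfl, hadd⟩ := h
  have h1 : ℓ (σ i * w) + 1 = ℓ w := by
    rcases cs.length_simple_mul w i with h' | h' <;> omega
  have h2 : ℓ (σ i * (w * x)) ≤ ℓ (σ i * w) + ℓ x := by
    have := cs.length_mul_le (σ i * w) x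
    rwa [mul_assoc] at this
  have h3 : ℓ (w * x) ≤ ℓ (σ i * (w * x)) + 1 := by
    rcases cs.length_simple_mul (w * x) i with h' | h' <;> omega
  refine ⟨by omega, ⟨x, by rw [mul_assoc], by omega⟩⟩

lemma T2 {a b : W} {i : B} (h : weakLeftLE cs a b) (hb : ℓ b < ℓ (σ i * b)) :
    weakLeftLE cs (σ i * a) (σ i * b) := by
  obtain ⟨x, rfl, hadd⟩ := h
  have h1 : ℓ (σ i * (a * x)) = ℓ (a * x) + 1 := by
    rcases cs.length_simple_mul (a * x) i with h' | h' <;> omega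
  have h2 : ℓ (σ i * (a * x)) ≤ ℓ (σ i * a) + ℓ x := by
    have := cs.length_mul_le (σ i * a) x
    rwa [mul_assoc] at this
  have h3 : ℓ (σ i * a) ≤ ℓ a + 1 := by
    rcases cs.length_simple_mul a i with h' | h' <;> omega
  exact ⟨x, by rw [mul_assoc], by omega⟩

lemma T3 {w u : W} {i : B} (h : weakLeftLE cs w u) (hu : ℓ (σ i * u) < ℓ u)
    (hw : ℓ w < ℓ (σ i * w)) : weakLeftLE cs w (σ i * u) := by
  obtain ⟨x, rfl, hadd⟩ := h
  obtain ⟨ωw, hωw, hw'⟩ := cs.exists_reduced_word' w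
  obtain ⟨ωx, hωx, hx'⟩ := cs.exists_reduced_word' x
  have hπ : π (ωx.reverse ++ ωw.reverse) = (w * x)⁻¹ := by
    rw [cs.wordProd_append, cs.wordProd_reverse, cs.wordProd_reverse, ← hw', ← hx',
      mul_inv_rev]
  have hri : cs.IsRightInversion ((w * x)⁻¹) (σ i) := by
    constructor
    · exact cs.isReflection_simple i
    · have he : (w * x)⁻¹ * σ i = (σ i * (w * x))⁻¹ := by
        rw [mul_inv_rev (σ i) (w * x), cs.inv_simple]
      rw [he, cs.length_inv, cs.length_inv]
      exact hu
  have hmem := mem_rightInvSeq cs hri hπ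
  rw [rightInvSeq_append] at hmem
  rcases List.mem_append.mp hmem with h1 | h2
  · obtain ⟨z, hz, hz2⟩ := List.mem_map.mp h1
    have hπr : π ωw.reverse = w⁻¹ := by rw [cs.wordProd_reverse, ← hw']
    rw [hπr] at hz2
    -- hz2 : (w⁻¹)⁻¹ * z * w⁻¹ = σ i
    have hzval : z = w⁻¹ * σ i * w := by
      rw [← hz2]
      group
    have hinv := cs.isRightInversion_of_mem_rightInvSeq
      ((cs.isReduced_reverse_iff ωx).mpr hωx) hz
    rw [cs.wordProd_reverse, ← hx'] at hinv
    have hzrefl := hinv.1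
    have hlt : ℓ (z * x) < ℓ x := by
      have he : (x⁻¹ * z)⁻¹ = z * x := by
        rw [mul_inv_rev, inv_inv, hzrefl.inv]
      calc ℓ (z * x) = ℓ (x⁻¹ * z) := by rw [← he, cs.length_inv]
      _ < ℓ x⁻¹ := hinv.2
      _ = ℓ x := cs.length_inv x
    refine ⟨z * x, ?_, ?_⟩
    · rw [hzval]
      group
    · have e1 : ℓ (σ i * (w * x)) + 1 = ℓ (w * x) := by
        rcases cs.length_simple_mul (w * x) i with h' | h' <;> omega
      have e2 : ℓ (σ i * (w * x)) ≤ ℓ w + ℓ (z * x) := by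
        have h5 := cs.length_mul_le w (z * x)
        rw [show w * (z * x) = σ i * (w * x) by rw [hzval]; group] at h5
        exact h5
      omega
  · have hinv := cs.isRightInversion_of_mem_rightInvSeq
      ((cs.isReduced_reverse_iff ωw).mpr hωw) h2
    rw [cs.wordProd_reverse, ← hw'] at hinv
    have : ℓ (σ i * w) < ℓ w := by
      have he : (w⁻¹ * σ i)⁻¹ = σ i * w := by
        rw [mul_inv_rev, inv_inv, cs.inv_simple]
      calc ℓ (σ i * w) = ℓ (w⁻¹ * σ i) := by rw [← he, cs.length_inv]
      _ < ℓ w⁻¹ := hinv.2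
      _ = ℓ w := cs.length_inv w
    omega

/-! ### Main argument: the maximal-length common lower bound is the meet -/

lemma meet_max (n : ℕ) : ∀ u v m : W, ℓ u + ℓ v = n →
    weakLeftLE cs m u → weakLeftLE cs m v →
    (∀ z, weakLeftLE cs z u → weakLeftLE cs z v → ℓ z ≤ ℓ m) →
    ∀ w, weakLeftLE cs w u → weakLeftLE cs w v → weakLeftLE cs w m := by
  induction n using Nat.strong_induction_on with
  | _ n ih =>
    intro u v m hn hmu hmv hmax w hwu hwv
    by_cases hw1 : w = 1
    · subst hw1
      exact le_one_left cs m
    · obtain ⟨k, hk⟩ := cs.exists_leftDescent_of_ne_one hw1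
      have hdw : ℓ (σ k * w) < ℓ w := hk
      have hu' := T1 cs hwu hdw
      have hv' := T1 cs hwv hdw
      -- k is a descent of m
      have hdm : ℓ (σ k * m) < ℓ m := by
        by_contra hnd
        have hgt : ℓ m < ℓ (σ k * m) :=
          lt_of_le_of_ne (not_lt.mp hnd) (Ne.symm (cs.length_simple_mul_ne m k))
        have h1 : weakLeftLE cs m (σ k * u) := T3 cs hmu hu'.1 hgt
        have h2 : weakLeftLE cs m (σ k * v) := T3 cs hmv hv'.1 hgt
        have h3 : weakLeftLE cs (σ k * m) u := by
          have h4 := T2 cs h1 (show ℓ (σ k * u) < ℓ (σ k * (σ k * u)) by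
            rw [cs.simple_mul_simple_cancel_left]; exact hu'.1)
          rwa [cs.simple_mul_simple_cancel_left] at h4
        have h5 : weakLeftLE cs (σ k * m) v := by
          have h6 := T2 cs h2 (show ℓ (σ k * v) < ℓ (σ k * (σ k * v)) by
            rw [cs.simple_mul_simple_cancel_left]; exact hv'.1)
          rwa [cs.simple_mul_simple_cancel_left] at h6
        have h7 := hmax (σ k * m) h3 h5
        omega
      have hm' := T1 cs hmu hdm
      have hm'' := T1 cs hmv hdm
      -- σ k * m is a maximal lower bound of (σ k * u, σ k * v)
      have hmax' : ∀ z, weakLeftLE cs z (σ k * u) → weakLeftLE cs z (σ k * v) →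
          ℓ z ≤ ℓ (σ k * m) := by
        intro z hz1 hz2
        have hznd : ℓ z < ℓ (σ k * z) := by
          by_contra hcon
          have hlt : ℓ (σ k * z) < ℓ z :=
            lt_of_le_of_ne (not_lt.mp hcon) (cs.length_simple_mul_ne z k)
          have h8 := (T1 cs hz1 hlt).1
          rw [cs.simple_mul_simple_cancel_left] at h8
          omega
        have h5 : weakLeftLE cs (σ k * z) u := by
          have h9 := T2 cs hz1 (show ℓ (σ k * u) < ℓ (σ k * (σ k * u)) by
            rw [cs.simple_mul_simple_cancel_left]; exact hu'.1)
          rwa [cs.simple_mul_simple_cancel_left] at h9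
        have h6 : weakLeftLE cs (σ k * z) v := by
          have h10 := T2 cs hz2 (show ℓ (σ k * v) < ℓ (σ k * (σ k * v)) by
            rw [cs.simple_mul_simple_cancel_left]; exact hv'.1)
          rwa [cs.simple_mul_simple_cancel_left] at h10
        have h7 := hmax _ h5 h6
        have h8 : ℓ (σ k * z) = ℓ z + 1 := by
          rcases cs.length_simple_mul z k with h' | h' <;> omega
        have h9 : ℓ (σ k * m) + 1 = ℓ m := by
          rcases cs.length_simple_mul m k with h' | h' <;> omega
        omega
      have hlen : ℓ (σ k * u) + ℓ (σ k * v) < n := by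
        have e1 : ℓ (σ k * u) + 1 = ℓ u := by
          rcases cs.length_simple_mul u k with h' | h' <;> omega
        have e2 : ℓ (σ k * v) + 1 = ℓ v := by
          rcases cs.length_simple_mul v k with h' | h' <;> omega
        omega
      have key := ih _ hlen (σ k * u) (σ k * v) (σ k * m) rfl hm'.2 hm''.2 hmax'
        (σ k * w) hu'.2 hv'.2
      have hfin := T2 cs key (show ℓ (σ k * m) < ℓ (σ k * (σ k * m)) by
        rw [cs.simple_mul_simple_cancel_left]; exact hdm)
      rwa [cs.simple_mul_simple_cancel_left, cs.simple_mul_simple_cancel_left] at hfin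

end WeakMeetAux

/-- Any two elements `u, v` of a Coxeter group have a unique greatest lower
bound for the weak left order `≤_L`. -/
theorem exists_unique_weak_left_meet {B W : Type} [Group W]
    {M : CoxeterMatrix B} (cs : CoxeterSystem M W) (u v : W) :
    ∃! w0 : W, weakLeftLE cs w0 u ∧ weakLeftLE cs w0 v ∧
      ∀ w : W, weakLeftLE cs w u → weakLeftLE cs w v → weakLeftLE cs w w0 := by
  classical
  set S : Set ℕ := {n | ∃ x : W, (weakLeftLE cs x u ∧ weakLeftLE cs x v) ∧ cs.length x = n}
    with hS
  have hne : S.Nonempty :=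
    ⟨cs.length 1, 1, ⟨WeakMeetAux.le_one_left cs u, WeakMeetAux.le_one_left cs v⟩, rfl⟩
  have hbdd : BddAbove S := by
    refine ⟨cs.length u, ?_⟩
    rintro n ⟨x, ⟨hxu, _⟩, rfl⟩
    exact WeakMeetAux.le_length cs hxu
  obtain ⟨m, ⟨hmu, hmv⟩, hml⟩ := Nat.sSup_mem hne hbdd
  have hmax : ∀ z, weakLeftLE cs z u → weakLeftLE cs z v → cs.length z ≤ cs.length m := by
    intro z hzu hzv
    rw [hml]
    exact le_csSup hbdd ⟨z, ⟨hzu, hzv⟩, rfl⟩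
  refine ⟨m, ⟨hmu, hmv, fun w hwu hwv =>
    WeakMeetAux.meet_max cs _ u v m rfl hmu hmv hmax w hwu hwv⟩, ?_⟩
  rintro y ⟨hyu, hyv, hy⟩
  have h1 : weakLeftLE cs y m := WeakMeetAux.meet_max cs _ u v m rfl hmu hmv hmax y hyu hyv
  have h2 : weakLeftLE cs m y := hy m hmu hmv
  exact WeakMeetAux.le_antisymm' cs h1 h2
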